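/- Let $\lambda>0$ and let $\psi:[0,\infty)\to\mathbb{R}$ be measurable with $\int_1^\infty s^\beta|\psi(s)|ds<\infty$ for some $\beta>2\lambda$, $\int_0^1|\psi(s)|ds<\infty$, and $\int_0^\infty s^j\psi(s)ds=0$ for all even integers $0\le j\le 2[\lambda]$. Then the function $B_{\lambda+1}\psi(u)=\frac{2}{\Gamma(\lambda+1)}\int_0^{\sqrt u}\psi(v)(u-v^2)^{\lambda}dv$ satisfies $\int_0^\infty u^{-1}|B_{\lambda+1}\psi(u)|\,du<\infty$. -/

import Mathlib

open MeasureTheory Real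

/-- The modified fractional integral `B_δ ψ`. -/
noncomputable def fracB (δ : ℝ) (ψ : ℝ → ℝ) (u : ℝ) : ℝ :=
  (2 / Real.Gamma δ) * ∫ v in (0:ℝ)..(Real.sqrt u), ψ v * (u - v^2) ^ (δ - 1)

open Set
open scoped ENNReal



noncomputable def aC (lam : ℝ) (j : ℕ) : ℝ :=
  (-1)^j * (∏ i ∈ Finset.range j, (lam - i)) / (j.factorial)

noncomputable def tP (lam : ℝ) (m : ℕ) (u t : ℝ) : ℝ :=
  ∑ j ∈ Finset.range (m+1), aC lam j * u ^ (lam - (j:ℝ)) * t ^ j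

noncomputable def rem (lam : ℝ) (m : ℕ) (u t : ℝ) : ℝ := (u - t) ^ lam - tP lam m u t

lemma aC_zero (lam : ℝ) : aC lam 0 = 1 := by simp [aC]

lemma aC_succ (lam : ℝ) (j : ℕ) : ((j:ℝ)+1) * aC lam (j+1) = -lam * aC (lam - 1) j := by
  unfold aC
  rw [Finset.prod_range_succ']
  have h : ∀ i ∈ Finset.range j, lam - ((i:ℕ)+1 : ℕ) = (lam - 1) - i := by
    intro i _; push_cast; ring
  rw [Finset.prod_congr rfl h]
  rw [Nat.factorial_succ]
  have hj : (j.factorial : ℝ) ≠ 0 := Nat.cast_ne_zero.2 j.factorial_ne_zero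
  have hj1 : ((j:ℝ)+1) ≠ 0 := by positivity
  push_cast
  field_simp
  ring

lemma tP_zero (lam : ℝ) (m : ℕ) (u : ℝ) : tP lam m u 0 = u ^ lam := by
  unfold tP
  rw [Finset.sum_eq_single 0]
  · simp [aC_zero]
  · intro j _ hj; simp [zero_pow hj]
  · simp

lemma rem_zero (lam : ℝ) (m : ℕ) (u : ℝ) : rem lam m u 0 = 0 := by
  simp [rem, tP_zero]

lemma rpow_sub_deriv (u p s : ℝ) (hu : s < u) :
    HasDerivAt (fun t : ℝ => (u - t) ^ p) (-(p * (u - s) ^ (p-1))) s := by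
  have h1 : HasDerivAt (fun t : ℝ => u - t) (-1) s := by
    simpa using (hasDerivAt_id s).const_sub u
  have := h1.rpow_const (p := p) (Or.inl (by linarith : u - s ≠ 0))
  convert this using 1; ring

lemma tP_hasDeriv (lam : ℝ) (m : ℕ) (u t : ℝ) :
    HasDerivAt (fun t => tP lam (m+1) u t) (-lam * tP (lam-1) m u t) t := by
  have h : ∀ j ∈ Finset.range (m+2), HasDerivAt
      (fun t : ℝ => aC lam j * u ^ (lam - (j:ℝ)) * t ^ j)
      (aC lam j * u ^ (lam - (j:ℝ)) * ((j:ℝ) * t ^ (j-1))) t := by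
    intro j _
    exact (hasDerivAt_pow j t).const_mul _
  have hsum := HasDerivAt.sum h
  convert hsum using 1
  · rfl
  · rfl
  · ext x; rw [Finset.sum_apply]; rfl
  rw [Finset.sum_range_succ']
  simp only [Nat.cast_zero, pow_zero]
  have : ∀ k ∈ Finset.range (m+1),
      aC lam (k+1) * u ^ (lam - ((k:ℕ)+1 : ℕ)) * ((((k:ℕ)+1:ℕ):ℝ) * t ^ ((k+1)-1))
      = -lam * (aC (lam-1) k * u ^ ((lam-1) - (k:ℝ)) * t ^ k) := by
    intro k _
    have e1 : lam - (((k:ℕ)+1:ℕ):ℝ) = (lam - 1) - k := by push_cast; ring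
    have e2 : (((k:ℕ)+1:ℕ):ℝ) = (k:ℝ)+1 := by push_cast; ring
    rw [e1, e2]
    have := aC_succ lam k
    simp only [Nat.add_sub_cancel]
    linear_combination (u ^ ((lam-1) - (k:ℝ)) * t ^ k) * this
  rw [Finset.sum_congr rfl this]
  rw [tP]
  rw [Finset.mul_sum]
  simp



lemma tP_continuous (lam : ℝ) (m : ℕ) (u : ℝ) : Continuous (fun t => tP lam m u t) := by
  unfold tP
  exact continuous_finset_sum _ fun j _ => continuous_const.mul (continuous_pow j)

lemma rem_continuousOn (lam : ℝ) (m : ℕ) (u : ℝ) :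
    ContinuousOn (fun s => rem lam m u s) (Iio u) := by
  unfold rem
  refine ContinuousOn.sub ?_ (tP_continuous lam m u).continuousOn
  intro s hs
  have : ContinuousAt (fun s : ℝ => (u - s) ^ lam) s := by
    have h1 : ContinuousAt (fun s : ℝ => u - s) s := (continuous_const.sub continuous_id).continuousAt
    exact h1.rpow_const (Or.inl (by simp at hs; linarith))
  exact this.continuousWithinAt

lemma rem_hasDeriv (lam : ℝ) (m : ℕ) (u t : ℝ) (ht : t < u) :
    HasDerivAt (fun t => rem lam (m+1) u t) (-lam * rem (lam-1) m u t) t := by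
  have h1 := rpow_sub_deriv u lam t ht
  have h2 := tP_hasDeriv lam m u t
  have := h1.sub h2
  convert this using 1
  · rfl
  · rfl
  · rfl
  unfold rem; ring

lemma rem_eq_integral (lam : ℝ) (m : ℕ) (u t : ℝ) (ht : 0 ≤ t) (htu : t < u) :
    rem lam (m+1) u t = ∫ s in (0:ℝ)..t, -lam * rem (lam-1) m u s := by
  have key : ∫ s in (0:ℝ)..t, -lam * rem (lam-1) m u s = rem lam (m+1) u t - rem lam (m+1) u 0 := by
    refine intervalIntegral.integral_eq_sub_of_hasDerivAt ?_ ?_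
    · intro x hx
      rw [uIcc_of_le ht] at hx
      exact rem_hasDeriv lam m u x (lt_of_le_of_lt hx.2 htu)
    · refine (ContinuousOn.intervalIntegrable ?_)
      refine (continuousOn_const.mul ((rem_continuousOn (lam-1) m u).mono ?_))
      rw [uIcc_of_le ht]
      intro x hx; exact lt_of_le_of_lt hx.2 htu
  rw [rem_zero] at key; linarith

lemma rem0_eq_integral (lam : ℝ) (u t : ℝ) (ht : 0 ≤ t) (htu : t < u) :
    rem lam 0 u t = ∫ s in (0:ℝ)..t, -(lam * (u - s) ^ (lam - 1)) := by
  have key : (∫ s in (0:ℝ)..t, -(lam * (u - s) ^ (lam - 1)))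
      = (u - t) ^ lam - (u - 0) ^ lam := by
    refine intervalIntegral.integral_eq_sub_of_hasDerivAt (f := fun t => (u - t) ^ lam) ?_ ?_
    · intro x hx
      rw [uIcc_of_le ht] at hx
      exact rpow_sub_deriv u lam x (lt_of_le_of_lt hx.2 htu)
    · refine (ContinuousOn.intervalIntegrable ?_)
      refine (continuousOn_const.mul ?_).neg
      intro x hx
      rw [uIcc_of_le ht] at hx
      have : ContinuousAt (fun s : ℝ => (u - s) ^ (lam-1)) x :=
        ((continuous_const.sub continuous_id).continuousAt).rpow_const
          (Or.inl (by have := lt_of_le_of_lt hx.2 htu; intro h; simp only [Pi.sub_apply, id_eq] at h; linarith [h]))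
      exact this.continuousWithinAt
  simp only [sub_zero] at key
  rw [eq_comm] at key
  have h0 : tP lam 0 u t = u ^ lam := by
    simp [tP, aC]
  rw [rem, h0, key]

lemma rpow_mem_bound (p u x : ℝ) (hu : 0 < u) (h1 : u/2 ≤ x) (h2 : x ≤ u) :
    x ^ p ≤ (2 ^ (-p) + 1) * u ^ p := by
  have hx : 0 < x := by linarith
  have hup : 0 ≤ u ^ p := (Real.rpow_nonneg hu.le p)
  have h2p : (0:ℝ) ≤ 2 ^ (-p) := Real.rpow_nonneg (by norm_num) _
  rcases le_or_gt 0 p with hp | hp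
  · have := Real.rpow_le_rpow hx.le h2 hp
    nlinarith
  · have := Real.rpow_le_rpow_of_nonpos (by linarith : (0:ℝ) < u/2) h1 hp.le
    have heq : (u/2) ^ p = 2 ^ (-p) * u ^ p := by
      rw [div_rpow hu.le (by norm_num), Real.rpow_neg (by norm_num)]
      field_simp
    nlinarith

theorem taylor_bound (m : ℕ) : ∀ lam : ℝ, ∃ C : ℝ, 0 ≤ C ∧ ∀ u : ℝ, 0 < u → ∀ t, 0 ≤ t → t ≤ u/2 →
    |rem lam m u t| ≤ C * u ^ (lam - (m+1 : ℕ)) * t ^ (m+1) := by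
  induction m with
  | zero =>
    intro lam
    refine ⟨|lam| * (2 ^ (-(lam-1)) + 1), by positivity, ?_⟩
    intro u hu t ht htu
    have htu' : t < u := by linarith
    rw [rem0_eq_integral lam u t ht htu']
    have hb : ∀ s ∈ Icc 0 t, |(-(lam * (u - s) ^ (lam - 1)))| ≤ |lam| * ((2 ^ (-(lam-1)) + 1) * u ^ (lam-1)) := by
      intro s hs
      rw [abs_neg, abs_mul]
      refine mul_le_mul_of_nonneg_left ?_ (abs_nonneg lam)
      rw [abs_of_nonneg (Real.rpow_nonneg (by linarith [hs.2] : (0:ℝ) ≤ u - s) _)]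
      exact rpow_mem_bound (lam-1) u (u-s) hu (by linarith [hs.2]) (by linarith [hs.1])
    have := intervalIntegral.norm_integral_le_of_norm_le_const
      (C := |lam| * ((2 ^ (-(lam-1)) + 1) * u ^ (lam-1)))
      (f := fun s => -(lam * (u - s) ^ (lam - 1))) (a := 0) (b := t) ?_
    · rw [Real.norm_eq_abs, sub_zero, abs_of_nonneg ht] at this
      calc |∫ s in (0:ℝ)..t, -(lam * (u - s) ^ (lam - 1))|
          ≤ |lam| * ((2 ^ (-(lam-1)) + 1) * u ^ (lam-1)) * t := this
        _ = |lam| * (2 ^ (-(lam-1)) + 1) * u ^ (lam - ((0:ℕ)+1:ℕ)) * t ^ (0+1) := by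
            push_cast; ring
    · intro x hx
      rw [uIoc_of_le ht] at hx
      exact hb x ⟨hx.1.le, hx.2⟩
  | succ m ih =>
    intro lam
    obtain ⟨C, hC0, hC⟩ := ih (lam - 1)
    refine ⟨|lam| * C, by positivity, ?_⟩
    intro u hu t ht htu
    have htu' : t < u := by linarith
    rw [rem_eq_integral lam m u t ht htu']
    have hb : ∀ s ∈ Icc 0 t, |(-lam * rem (lam-1) m u s)| ≤ |lam| * (C * u ^ ((lam-1) - (m+1:ℕ)) * t ^ (m+1)) := by
      intro s hs
      rw [abs_mul, abs_neg]
      refine mul_le_mul_of_nonneg_left ?_ (abs_nonneg lam)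
      calc |rem (lam-1) m u s| ≤ C * u ^ ((lam-1) - (m+1:ℕ)) * s ^ (m+1) :=
            hC u hu s hs.1 (le_trans hs.2 htu)
        _ ≤ C * u ^ ((lam-1) - (m+1:ℕ)) * t ^ (m+1) := by
            refine mul_le_mul_of_nonneg_left (pow_le_pow_left₀ hs.1 hs.2 _) ?_
            positivity
    have := intervalIntegral.norm_integral_le_of_norm_le_const
      (C := |lam| * (C * u ^ ((lam-1) - (m+1:ℕ)) * t ^ (m+1)))
      (f := fun s => -lam * rem (lam-1) m u s) (a := 0) (b := t) ?_
    · rw [Real.norm_eq_abs, sub_zero, abs_of_nonneg ht] at this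
      calc |∫ s in (0:ℝ)..t, -lam * rem (lam-1) m u s|
          ≤ |lam| * (C * u ^ ((lam-1) - (m+1:ℕ)) * t ^ (m+1)) * t := this
        _ = |lam| * C * u ^ (lam - (m+1+1:ℕ)) * t ^ (m+1+1) := by
            have : (lam-1) - ((m+1:ℕ):ℝ) = lam - ((m+1+1:ℕ):ℝ) := by push_cast; ring
            rw [this]; ring
    · intro x hx
      rw [uIoc_of_le ht] at hx
      exact hb x ⟨hx.1.le, hx.2⟩



noncomputable def Kk (lam u v : ℝ) : ℝ := if v^2 < u then (u - v^2) ^ lam else 0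
noncomputable def Dd (lam : ℝ) (m : ℕ) (u v : ℝ) : ℝ := Kk lam u v - tP lam m u (v^2)
noncomputable def Ww (lam : ℝ) (m : ℕ) (u v : ℝ) : ℝ :=
  if 2*v^2 ≤ u then u ^ (lam - (m+1:ℕ)) * (v^2)^(m+1) else (v^2) ^ lam

lemma Ww_nonneg (lam : ℝ) (m : ℕ) (u v : ℝ) (hu : 0 < u) : 0 ≤ Ww lam m u v := by
  unfold Ww
  split
  · positivity
  · positivity

lemma kernel_bound (lam : ℝ) (hlam : 0 < lam) (m : ℕ) (hm1 : (m:ℝ) ≤ lam) :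
    ∃ C : ℝ, 0 ≤ C ∧ ∀ u : ℝ, 0 < u → ∀ v : ℝ, 0 < v →
      |Dd lam m u v| ≤ C * Ww lam m u v := by
  obtain ⟨C₁, hC₁0, hC₁⟩ := taylor_bound m lam
  set C₂ : ℝ := 2^lam + ∑ j ∈ Finset.range (m+1), |aC lam j| * 2^(lam - (j:ℝ)) with hC₂
  have hC₂0 : 0 ≤ C₂ := by
    refine add_nonneg (Real.rpow_nonneg (by norm_num) _) (Finset.sum_nonneg fun j _ => ?_)
    exact mul_nonneg (abs_nonneg _) (Real.rpow_nonneg (by norm_num) _)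
  refine ⟨max C₁ C₂, le_max_of_le_left hC₁0, ?_⟩
  intro u hu v hv
  have hv2 : (0:ℝ) < v^2 := by positivity
  by_cases h : 2*v^2 ≤ u
  · have hlt : v^2 < u := by nlinarith
    have hK : Kk lam u v = (u - v^2) ^ lam := if_pos hlt
    have hD : Dd lam m u v = rem lam m u (v^2) := by rw [Dd, hK]; rfl
    rw [hD, Ww, if_pos h]
    calc |rem lam m u (v^2)| ≤ C₁ * u ^ (lam - (m+1:ℕ)) * (v^2) ^ (m+1) :=
          hC₁ u hu (v^2) hv2.le (by linarith)
      _ ≤ max C₁ C₂ * (u ^ (lam - (m+1:ℕ)) * (v^2) ^ (m+1)) := by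
          rw [← mul_assoc]
          refine mul_le_mul_of_nonneg_right (mul_le_mul_of_nonneg_right (le_max_left _ _) ?_) ?_
          · positivity
          · positivity
  · push_neg at h
    rw [Ww, if_neg (not_le.2 h)]
    have hW : (0:ℝ) ≤ (v^2) ^ lam := by positivity
    have hKb : |Kk lam u v| ≤ 2^lam * (v^2) ^ lam := by
      unfold Kk
      split
      · next hlt =>
        rw [abs_of_nonneg (Real.rpow_nonneg (by linarith) _)]
        calc (u - v^2) ^ lam ≤ u ^ lam := by
              apply Real.rpow_le_rpow (by linarith) (by linarith) hlam.le
          _ ≤ (2 * v^2) ^ lam := Real.rpow_le_rpow hu.le h.le hlam.le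
          _ = 2^lam * (v^2) ^ lam := Real.mul_rpow (by norm_num) hv2.le
      · simp; positivity
    have hPb : |tP lam m u (v^2)| ≤ (∑ j ∈ Finset.range (m+1), |aC lam j| * 2^(lam - (j:ℝ))) * (v^2) ^ lam := by
      rw [tP, Finset.sum_mul]
      refine le_trans (Finset.abs_sum_le_sum_abs _ _) (Finset.sum_le_sum fun j hj => ?_)
      have hj' : (j:ℝ) ≤ lam := by
        have : j ≤ m := Nat.lt_succ_iff.mp (Finset.mem_range.mp hj)
        calc (j:ℝ) ≤ m := Nat.cast_le.2 this
          _ ≤ lam := hm1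
      have hexp : (0:ℝ) ≤ lam - j := by linarith
      rw [abs_mul, abs_mul]
      rw [abs_of_nonneg (Real.rpow_nonneg hu.le _), abs_of_nonneg (pow_nonneg hv2.le _)]
      calc |aC lam j| * u ^ (lam - (j:ℝ)) * (v^2)^j
          ≤ |aC lam j| * (2*v^2) ^ (lam - (j:ℝ)) * (v^2)^j := by
            refine mul_le_mul_of_nonneg_right (mul_le_mul_of_nonneg_left ?_ (abs_nonneg _)) (pow_nonneg hv2.le _)
            exact Real.rpow_le_rpow hu.le h.le hexp
        _ = |aC lam j| * 2^(lam - (j:ℝ)) * ((v^2) ^ (lam - (j:ℝ)) * (v^2) ^ (j:ℝ)) := by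
            rw [Real.mul_rpow (by norm_num) hv2.le, ← Real.rpow_natCast (v^2) j]
            ring
        _ = |aC lam j| * 2^(lam - (j:ℝ)) * (v^2) ^ lam := by
            rw [← Real.rpow_add hv2]; ring_nf
    calc |Dd lam m u v| ≤ |Kk lam u v| + |tP lam m u (v^2)| := abs_sub _ _
      _ ≤ 2^lam * (v^2)^lam + (∑ j ∈ Finset.range (m+1), |aC lam j| * 2^(lam - (j:ℝ))) * (v^2) ^ lam :=
          add_le_add hKb hPb
      _ = C₂ * (v^2) ^ lam := by rw [hC₂]; ring
      _ ≤ max C₁ C₂ * (v^2) ^ lam := mul_le_mul_of_nonneg_right (le_max_right _ _) hW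






noncomputable def Mv (β v : ℝ) : ℝ := if v ≤ 1 then 1 else v ^ β

lemma Mv_nonneg (β v : ℝ) : 0 ≤ Mv β v := by
  unfold Mv; split
  · norm_num
  · next h => exact Real.rpow_nonneg (by push_neg at h; linarith) _

lemma sq_rpow_eq (v lam : ℝ) (hv : 0 < v) : (v^2) ^ lam = v ^ (2*lam) := by
  rw [← Real.rpow_natCast v 2, ← Real.rpow_mul hv.le]
  norm_num

lemma ioc_inv_integral (b : ℝ) (hb : 1 ≤ b) : ∫ x in Ioc (1:ℝ) b, x⁻¹ = Real.log b := by
  rw [← intervalIntegral.integral_of_le hb]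
  rw [integral_inv (by rw [uIcc_of_le hb]; intro h; exact absurd h.1 (by norm_num))]
  simp

lemma W_lintegral (lam β : ℝ) (hlam : 0 < lam) (m : ℕ) (hm2 : lam < m+1) (hβ : 2*lam < β) :
    ∃ C : ℝ, 0 ≤ C ∧ ∀ v : ℝ, 0 < v →
      ∫⁻ u in Ioi (1:ℝ), ENNReal.ofReal (u⁻¹ * Ww lam m u v) ≤ ENNReal.ofReal (C * Mv β v) := by
  set ε : ℝ := β - 2*lam with hε
  have hε0 : 0 < ε := by rw [hε]; linarith
  set κ : ℝ := ((m+1:ℝ) - lam)⁻¹ with hκ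
  have hκ0 : 0 < κ := by rw [hκ]; apply inv_pos.2; linarith
  set p : ℝ := lam - (m+1:ℕ) - 1 with hp
  have hp1 : p < -1 := by rw [hp]; push_cast; linarith
  have hlog2 : (0:ℝ) ≤ Real.log 2 := Real.log_nonneg (by norm_num)
  refine ⟨κ + (Real.log 2 + 2/ε), by positivity, ?_⟩
  intro v hv
  have hv2 : (0:ℝ) < v^2 := by positivity
  set b : ℝ := max 1 (2*v^2) with hb
  have hb1 : (1:ℝ) ≤ b := le_max_left _ _
  have hb0 : (0:ℝ) < b := by linarith
  have hbv : 2*v^2 ≤ b := le_max_right _ _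
  have hsplit : ∫⁻ u in Ioi (1:ℝ), ENNReal.ofReal (u⁻¹ * Ww lam m u v)
      = (∫⁻ u in Ioc (1:ℝ) b, ENNReal.ofReal (u⁻¹ * Ww lam m u v))
        + ∫⁻ u in Ioi b, ENNReal.ofReal (u⁻¹ * Ww lam m u v) := by
    rw [← Ioc_union_Ioi_eq_Ioi hb1]
    rw [lintegral_union measurableSet_Ioi (Set.Ioc_disjoint_Ioi le_rfl)]
  rw [hsplit]
  -- Part II : over Ioc 1 b
  have partII : (∫⁻ u in Ioc (1:ℝ) b, ENNReal.ofReal (u⁻¹ * Ww lam m u v))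
      ≤ ENNReal.ofReal (Real.log b * (v^2)^lam) := by
    have hmono : ∀ u ∈ Ioc (1:ℝ) b, ENNReal.ofReal (u⁻¹ * Ww lam m u v)
        ≤ ENNReal.ofReal (u⁻¹ * (v^2)^lam) := by
      intro u hu
      apply ENNReal.ofReal_le_ofReal
      have hu0 : (0:ℝ) < u := by linarith [hu.1]
      refine mul_le_mul_of_nonneg_left ?_ (by positivity)
      unfold Ww
      split
      · next h2 =>
        have huv : v^2 ≤ u := by nlinarith
        calc u ^ (lam - (m+1:ℕ)) * (v^2)^(m+1)
            ≤ (v^2) ^ (lam - (m+1:ℕ)) * (v^2)^(m+1) := by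
              refine mul_le_mul_of_nonneg_right ?_ (by positivity)
              exact Real.rpow_le_rpow_of_nonpos hv2 huv (by push_cast; linarith)
          _ = (v^2) ^ lam := by
              rw [← Real.rpow_natCast (v^2) (m+1), ← Real.rpow_add hv2]
              norm_num
      · exact le_rfl
    have hmeas : Measurable (fun u : ℝ => ENNReal.ofReal (u⁻¹ * (v^2)^lam)) :=
      (measurable_inv.mul_const _).ennreal_ofReal
    calc (∫⁻ u in Ioc (1:ℝ) b, ENNReal.ofReal (u⁻¹ * Ww lam m u v))
        ≤ ∫⁻ u in Ioc (1:ℝ) b, ENNReal.ofReal (u⁻¹ * (v^2)^lam) :=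
          setLIntegral_mono hmeas hmono
      _ = ENNReal.ofReal (∫ u in Ioc (1:ℝ) b, u⁻¹ * (v^2)^lam) := by
          refine (MeasureTheory.ofReal_integral_eq_lintegral_ofReal ?_ ?_).symm
          · have hcont : ContinuousOn (fun u : ℝ => u⁻¹ * (v^2)^lam) (Icc 1 b) := by
              refine ContinuousOn.mul ?_ continuousOn_const
              refine ContinuousOn.inv₀ continuousOn_id ?_
              intro x hx h
              have h1 := hx.1
              rw [show x = 0 from h] at h1; norm_num at h1
            exact (hcont.integrableOn_Icc).mono_set Ioc_subset_Icc_self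
          · refine (ae_restrict_iff' measurableSet_Ioc).2 (ae_of_all _ fun u hu => ?_)
            have : (0:ℝ) < u := by linarith [hu.1]
            positivity
      _ = ENNReal.ofReal (Real.log b * (v^2)^lam) := by
          rw [MeasureTheory.integral_mul_const, ioc_inv_integral b hb1]
  -- Part I : over Ioi b
  have partI : (∫⁻ u in Ioi b, ENNReal.ofReal (u⁻¹ * Ww lam m u v))
      ≤ ENNReal.ofReal ((κ * b ^ (p+1)) * (v^2)^(m+1)) := by
    have hmono : ∀ u ∈ Ioi b, ENNReal.ofReal (u⁻¹ * Ww lam m u v)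
        ≤ ENNReal.ofReal (u ^ p * (v^2)^(m+1)) := by
      intro u hu
      apply ENNReal.ofReal_le_ofReal
      have hu0 : (0:ℝ) < u := lt_of_le_of_lt hb0.le hu
      have h2 : 2*v^2 ≤ u := le_trans hbv (le_of_lt hu)
      rw [Ww, if_pos h2]
      have : u ^ p = u⁻¹ * u ^ (lam - (m+1:ℕ)) := by
        rw [hp]
        rw [show lam - (m+1:ℕ) - 1 = (lam - (m+1:ℕ)) - 1 from rfl]
        rw [Real.rpow_sub hu0, Real.rpow_one]
        field_simp
      rw [this]; rw [mul_assoc]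
    have hmeas : Measurable (fun u : ℝ => ENNReal.ofReal (u ^ p * (v^2)^(m+1))) := by
      refine Measurable.ennreal_ofReal ?_
      exact (measurable_id.pow_const p).mul_const _
    calc (∫⁻ u in Ioi b, ENNReal.ofReal (u⁻¹ * Ww lam m u v))
        ≤ ∫⁻ u in Ioi b, ENNReal.ofReal (u ^ p * (v^2)^(m+1)) :=
          setLIntegral_mono hmeas hmono
      _ = ENNReal.ofReal (∫ u in Ioi b, u ^ p * (v^2)^(m+1)) := by
          refine (MeasureTheory.ofReal_integral_eq_lintegral_ofReal ?_ ?_).symm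
          · exact (integrableOn_Ioi_rpow_of_lt hp1 hb0).mul_const _
          · refine (ae_restrict_iff' measurableSet_Ioi).2 (ae_of_all _ fun u hu => ?_)
            have hu0 : (0:ℝ) < u := lt_of_le_of_lt hb0.le hu
            positivity
      _ = ENNReal.ofReal ((κ * b ^ (p+1)) * (v^2)^(m+1)) := by
          rw [MeasureTheory.integral_mul_const, integral_Ioi_rpow_of_lt hp1 hb0]
          have hpe : p + 1 = lam - ((m:ℝ)+1) := by rw [hp]; push_cast; ring
          have hq : lam - ((m:ℝ)+1) ≠ 0 := by intro h; nlinarith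
          have hq2 : (m:ℝ)+1 - lam ≠ 0 := by intro h; nlinarith
          have key : -b ^ (p+1) / (p+1) = κ * b ^ (p+1) := by
            rw [hκ]
            rw [show (p:ℝ) + 1 = lam - ((m:ℝ)+1) from hpe]
            field_simp
            ring
          rw [key]
  -- combine
  refine le_trans (add_le_add partII partI) ?_
  rw [← ENNReal.ofReal_add (mul_nonneg (Real.log_nonneg hb1) (by positivity))
    (mul_nonneg (mul_nonneg hκ0.le (Real.rpow_nonneg hb0.le _)) (by positivity))]
  apply ENNReal.ofReal_le_ofReal
  have hpe : p + 1 = lam - ((m:ℝ)+1) := by rw [hp]; push_cast; ring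
  rcases le_or_gt v 1 with hv1 | hv1
  · rw [Mv, if_pos hv1]
    have hb2 : b ≤ 2 := by
      rw [hb]; apply max_le (by norm_num); nlinarith
    have hlogb : Real.log b ≤ Real.log 2 := Real.log_le_log hb0 hb2
    have hlogb0 : 0 ≤ Real.log b := Real.log_nonneg hb1
    have hv2le : v^2 ≤ 1 := by nlinarith
    have hA : (v^2)^lam ≤ 1 := Real.rpow_le_one hv2.le hv2le hlam.le
    have hA0 : (0:ℝ) ≤ (v^2)^lam := by positivity
    have hBp : b ^ (p+1) ≤ 1 :=
      Real.rpow_le_one_of_one_le_of_nonpos hb1 (by linarith)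
    have hBp0 : (0:ℝ) ≤ b ^ (p+1) := by positivity
    have hP : (v^2)^(m+1) ≤ 1 := pow_le_one₀ hv2.le hv2le
    have hP0 : (0:ℝ) ≤ (v^2)^(m+1) := by positivity
    have t1 : Real.log b * (v^2)^lam ≤ Real.log 2 := by
      calc Real.log b * (v^2)^lam ≤ Real.log 2 * 1 := mul_le_mul hlogb hA hA0 hlog2
        _ = Real.log 2 := by ring
    have t2 : κ * b ^ (p+1) * (v^2)^(m+1) ≤ κ := by
      calc κ * b ^ (p+1) * (v^2)^(m+1) ≤ (κ * 1) * 1 :=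
            mul_le_mul (mul_le_mul le_rfl hBp hBp0 hκ0.le) hP hP0 (by positivity)
        _ = κ := by ring
    have h2ε : (0:ℝ) ≤ 2/ε := by positivity
    have expand : (κ + (Real.log 2 + 2/ε)) * (1:ℝ) = κ + Real.log 2 + 2/ε := by ring
    rw [expand]
    linarith [t1, t2]
  · rw [Mv, if_neg (not_le.2 hv1)]
    have hbeq : b = 2*v^2 := by
      rw [hb]; exact max_eq_right (by nlinarith)
    have hAle : (v^2)^lam ≤ v ^ β := by
      rw [sq_rpow_eq v lam hv]
      exact Real.rpow_le_rpow_of_exponent_le hv1.le (by linarith)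
    have hA0 : (0:ℝ) ≤ (v^2)^lam := by positivity
    have hvβ0 : (0:ℝ) ≤ v ^ β := by positivity
    -- term 2
    have hBp : b ^ (p+1) ≤ (v^2) ^ (p+1) := by
      rw [hbeq]
      exact Real.rpow_le_rpow_of_nonpos hv2 (by nlinarith) (by rw [hpe]; linarith)
    have ht2 : κ * b ^ (p+1) * (v^2)^(m+1) ≤ κ * v ^ β := by
      have hcomb : (v^2) ^ (p+1) * (v^2)^(m+1) = (v^2) ^ lam := by
        rw [← Real.rpow_natCast (v^2) (m+1), ← Real.rpow_add hv2, hpe]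
        push_cast; ring_nf
      calc κ * b ^ (p+1) * (v^2)^(m+1) ≤ κ * (v^2) ^ (p+1) * (v^2)^(m+1) := by
            refine mul_le_mul_of_nonneg_right (mul_le_mul_of_nonneg_left hBp hκ0.le) (by positivity)
        _ = κ * (v^2) ^ lam := by rw [mul_assoc, hcomb]
        _ ≤ κ * v ^ β := mul_le_mul_of_nonneg_left hAle hκ0.le
    -- term 1
    have hlogv : Real.log v ≤ v ^ ε / ε := Real.log_le_rpow_div hv.le hε0
    have hlogv0 : 0 ≤ Real.log v := Real.log_nonneg hv1.le
    have hlogb : Real.log b = Real.log 2 + 2 * Real.log v := by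
      rw [hbeq, Real.log_mul (by norm_num) (by positivity), Real.log_pow]
      push_cast; ring
    have hLA : Real.log v * (v^2)^lam ≤ v ^ β / ε := by
      rw [sq_rpow_eq v lam hv]
      calc Real.log v * v ^ (2*lam) ≤ (v ^ ε / ε) * v ^ (2*lam) := by
            refine mul_le_mul_of_nonneg_right hlogv (by positivity)
        _ = v ^ β / ε := by
            rw [div_mul_eq_mul_div, ← Real.rpow_add hv]
            congr 2
            rw [hε]; ring
    have ht1 : Real.log b * (v^2)^lam ≤ Real.log 2 * v ^ β + 2 * (v ^ β / ε) := by
      rw [hlogb]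
      have : (Real.log 2 + 2 * Real.log v) * (v^2)^lam
          = Real.log 2 * (v^2)^lam + 2 * (Real.log v * (v^2)^lam) := by ring
      rw [this]
      refine add_le_add (mul_le_mul_of_nonneg_left hAle hlog2) ?_
      linarith
    have hdiv : 2 * (v ^ β / ε) = (2/ε) * v ^ β := by ring
    have expand : (κ + (Real.log 2 + 2/ε)) * v ^ β
        = κ * v ^ β + Real.log 2 * v ^ β + (2/ε) * v ^ β := by ring
    rw [expand]
    linarith [ht1, ht2, hdiv]






lemma Kk_measurable (lam : ℝ) : Measurable (fun p : ℝ × ℝ => Kk lam p.1 p.2) := by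
  unfold Kk
  refine Measurable.ite (measurableSet_lt (measurable_snd.pow_const 2) measurable_fst) ?_ measurable_const
  exact (measurable_fst.sub (measurable_snd.pow_const 2)).pow_const lam

lemma Ww_measurable (lam : ℝ) (m : ℕ) : Measurable (fun p : ℝ × ℝ => Ww lam m p.1 p.2) := by
  unfold Ww
  refine Measurable.ite (measurableSet_le ((measurable_snd.pow_const 2).const_mul 2) measurable_fst) ?_ ?_
  · exact (measurable_fst.pow_const _).mul ((measurable_snd.pow_const 2).pow_const (m+1))
  · exact (measurable_snd.pow_const 2).pow_const lam

lemma Kk_nonneg (lam u v : ℝ) (hu : 0 < u) : 0 ≤ Kk lam u v := by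
  unfold Kk; split
  · next h => exact Real.rpow_nonneg (by linarith) _
  · exact le_rfl

lemma Kk_le (lam u v : ℝ) (hlam : 0 < lam) (hu : 0 < u) : Kk lam u v ≤ u ^ lam := by
  unfold Kk; split
  · next h => exact Real.rpow_le_rpow (by linarith) (by nlinarith [sq_nonneg v]) hlam.le
  · positivity

theorem stmt_10 (lam : ℝ) (hlam : 0 < lam) (ψ : ℝ → ℝ) (hmeas : Measurable ψ)
    (β : ℝ) (hβ : 2 * lam < β)
    (hint1 : IntegrableOn (fun s => s ^ β * |ψ s|) (Set.Ici 1))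
    (hint0 : IntegrableOn (fun s => |ψ s|) (Set.Icc 0 1))
    (hmom : ∀ j : ℕ, Even j → (j : ℝ) ≤ 2 * ⌊lam⌋ →
      ∫ s in Set.Ici (0:ℝ), s ^ (j : ℝ) * ψ s = 0) :
    IntegrableOn (fun u => u⁻¹ * |fracB (lam + 1) ψ u|) (Set.Ioi 0) := by
  set m : ℕ := ⌊lam⌋.toNat with hm
  have hmR : (m:ℝ) = (⌊lam⌋ : ℝ) := by
    exact_mod_cast congrArg (Int.cast : ℤ → ℝ) (Int.toNat_of_nonneg (Int.floor_nonneg.2 hlam.le))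
  have hm1 : (m:ℝ) ≤ lam := by rw [hmR]; exact Int.floor_le lam
  have hm2 : lam < m+1 := by rw [hmR]; exact Int.lt_floor_add_one lam
  have hβ0 : (0:ℝ) < β := by linarith
  -- |ψ| locally integrable
  have habs1 : IntegrableOn (fun v => |ψ v|) (Ioc 0 1) := hint0.mono_set Ioc_subset_Icc_self
  have habsR : ∀ R : ℝ, IntegrableOn (fun v => |ψ v|) (Ioc 0 R) := by
    intro R
    rcases le_or_gt R 1 with hR | hR
    · exact habs1.mono_set (Ioc_subset_Ioc le_rfl hR)
    · rw [← Ioc_union_Ioc_eq_Ioc (by norm_num : (0:ℝ) ≤ 1) hR.le]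
      refine IntegrableOn.union habs1 ?_
      refine Integrable.mono' (hint1.mono_set (fun x hx => hx.1.le : Ioc (1:ℝ) R ⊆ Ici 1))
        hmeas.abs.aestronglyMeasurable ?_
      refine (ae_restrict_iff' measurableSet_Ioc).2 (ae_of_all _ fun v hv => ?_)
      have hv1 : (1:ℝ) ≤ v := hv.1.le
      have h1 : (1:ℝ) ≤ v ^ β := by
        calc (1:ℝ) = v ^ (0:ℝ) := (Real.rpow_zero v).symm
          _ ≤ v ^ β := Real.rpow_le_rpow_of_exponent_le hv1 hβ0.le
      rw [Real.norm_eq_abs, abs_abs]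
      nlinarith [abs_nonneg (ψ v)]
  -- integrability of |ψ| * Mv
  have hMint : IntegrableOn (fun v => |ψ v| * Mv β v) (Ioi 0) := by
    rw [← Ioc_union_Ioi_eq_Ioi (zero_le_one : (0:ℝ) ≤ 1)]
    refine IntegrableOn.union ?_ ?_
    · refine habs1.congr_fun (fun v hv => ?_) measurableSet_Ioc
      rw [Mv, if_pos hv.2, mul_one]
    · refine (hint1.mono_set (fun x hx => mem_Ici.2 (le_of_lt hx) : Ioi (1:ℝ) ⊆ Ici 1)).congr_fun
        (fun v hv => ?_) measurableSet_Ioi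
      rw [Mv, if_neg (not_le.2 hv)]
      ring
  -- monomials
  have hmono_le : ∀ j : ℕ, j ≤ m → ∀ v : ℝ, 0 < v → |v ^ (2*j) * ψ v| ≤ |ψ v| * Mv β v := by
    intro j hj v hv
    rw [abs_mul, abs_pow, abs_of_nonneg hv.le]
    rcases le_or_gt v 1 with hv1 | hv1
    · rw [Mv, if_pos hv1]
      have : v ^ (2*j) ≤ 1 := pow_le_one₀ hv.le hv1
      nlinarith [abs_nonneg (ψ v)]
    · rw [Mv, if_neg (not_le.2 hv1)]
      have h2j : ((2*j : ℕ):ℝ) ≤ β := by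
        push_cast
        have : (j:ℝ) ≤ m := Nat.cast_le.2 hj
        nlinarith
      have : v ^ (2*j) ≤ v ^ β := by
        rw [← Real.rpow_natCast v (2*j)]
        exact Real.rpow_le_rpow_of_exponent_le hv1.le h2j
      nlinarith [abs_nonneg (ψ v)]
  have h2jint : ∀ j : ℕ, j ≤ m → IntegrableOn (fun v => v ^ (2*j) * ψ v) (Ioi 0) := by
    intro j hj
    refine Integrable.mono' hMint ((measurable_id.pow_const (2*j)).mul hmeas).aestronglyMeasurable ?_
    refine (ae_restrict_iff' measurableSet_Ioi).2 (ae_of_all _ fun v hv => ?_)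
    exact (by rw [Real.norm_eq_abs]; exact hmono_le j hj v hv)
  have hmom' : ∀ j : ℕ, j ≤ m → ∫ v in Ioi (0:ℝ), v ^ (2*j) * ψ v = 0 := by
    intro j hj
    have hcond : ((2*j : ℕ):ℝ) ≤ 2 * ⌊lam⌋ := by
      push_cast
      have : (j:ℝ) ≤ m := Nat.cast_le.2 hj
      rw [← hmR]; linarith
    have h0 := hmom (2*j) (even_two_mul j) hcond
    calc ∫ v in Ioi (0:ℝ), v ^ (2*j) * ψ v
        = ∫ v in Ici (0:ℝ), v ^ (2*j) * ψ v := integral_Ici_eq_integral_Ioi.symm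
      _ = ∫ s in Ici (0:ℝ), s ^ (((2*j : ℕ)):ℝ) * ψ s := by
          refine integral_congr_ae (ae_of_all _ fun s => ?_)
          show s ^ (2*j) * ψ s = s ^ (((2*j : ℕ)):ℝ) * ψ s
          rw [Real.rpow_natCast]
      _ = 0 := h0
  -- integrability of ψ * K
  have hKint : ∀ u : ℝ, 0 < u → IntegrableOn (fun v => ψ v * Kk lam u v) (Ioi 0) := by
    intro u hu
    set R : ℝ := max 1 (Real.sqrt u) with hR
    refine Integrable.mono'
      (g := fun v => u ^ lam * ((Ioc (0:ℝ) R).indicator (fun v => |ψ v|) v)) ?_ ?_ ?_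
    · exact (((integrable_indicator_iff measurableSet_Ioc).2 (habsR R)).restrict.const_mul _)
    · exact (hmeas.mul ((Kk_measurable lam).comp (measurable_const.prodMk measurable_id))).aestronglyMeasurable
    · refine (ae_restrict_iff' measurableSet_Ioi).2 (ae_of_all _ fun v hv => ?_)
      rw [Real.norm_eq_abs, abs_mul]
      show |ψ v| * |Kk lam u v| ≤ u ^ lam * ((Ioc (0:ℝ) R).indicator (fun v => |ψ v|) v)
      by_cases hlt : v^2 < u
      · have hvR : v ∈ Ioc (0:ℝ) R := by
          refine ⟨hv, ?_⟩
          calc v ≤ Real.sqrt u := by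
                have := (Real.lt_sqrt (le_of_lt hv)).2 hlt
                linarith
            _ ≤ R := le_max_right _ _
        rw [indicator_of_mem hvR]
        have h1 : |Kk lam u v| ≤ u ^ lam := by
          rw [abs_of_nonneg (Kk_nonneg lam u v hu)]
          exact Kk_le lam u v hlam hu
        calc |ψ v| * |Kk lam u v| ≤ |ψ v| * u ^ lam :=
              mul_le_mul_of_nonneg_left h1 (abs_nonneg _)
          _ = u ^ lam * |ψ v| := by ring
      · rw [Kk, if_neg hlt, abs_zero, mul_zero]
        have : 0 ≤ (Ioc (0:ℝ) R).indicator (fun v => |ψ v|) v :=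
          indicator_nonneg (fun v _ => abs_nonneg _) v
        positivity
  -- ψ * tP rearrangement
  have htPeq : ∀ u : ℝ, (fun v => ψ v * tP lam m u (v^2))
      = fun v => ∑ j ∈ Finset.range (m+1), (aC lam j * u ^ (lam - (j:ℝ))) * (v ^ (2*j) * ψ v) := by
    intro u
    funext v
    rw [tP, Finset.mul_sum]
    refine Finset.sum_congr rfl fun j _ => ?_
    rw [← pow_mul]
    ring
  have hPint : ∀ u : ℝ, 0 < u → IntegrableOn (fun v => ψ v * tP lam m u (v^2)) (Ioi 0) := by
    intro u hu
    rw [htPeq u]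
    exact integrable_finset_sum _ fun j hj =>
      (h2jint j (Nat.lt_succ_iff.mp (Finset.mem_range.mp hj))).const_mul _
  have hPzero : ∀ u : ℝ, 0 < u → ∫ v in Ioi (0:ℝ), ψ v * tP lam m u (v^2) = 0 := by
    intro u hu
    rw [htPeq u]
    rw [integral_finset_sum _ (fun j hj =>
      (h2jint j (Nat.lt_succ_iff.mp (Finset.mem_range.mp hj))).const_mul _)]
    refine Finset.sum_eq_zero fun j hj => ?_
    rw [integral_const_mul, hmom' j (Nat.lt_succ_iff.mp (Finset.mem_range.mp hj)), mul_zero]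
  -- F and its properties
  set F : ℝ → ℝ := fun u => ∫ v in Ioi (0:ℝ), ψ v * Kk lam u v with hF
  have hFmeas : Measurable F := by
    have huncurry : Measurable (Function.uncurry (fun u v => ψ v * Kk lam u v)) :=
      (hmeas.comp measurable_snd).mul (Kk_measurable lam)
    exact (huncurry.stronglyMeasurable.integral_prod_right).measurable
  have hDint : ∀ u : ℝ, 0 < u → IntegrableOn (fun v => ψ v * Dd lam m u v) (Ioi 0) := by
    intro u hu
    have : (fun v => ψ v * Dd lam m u v)
        = fun v => ψ v * Kk lam u v - ψ v * tP lam m u (v^2) := by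
      funext v; rw [Dd]; ring
    rw [this]
    exact (hKint u hu).sub (hPint u hu)
  have hFD : ∀ u : ℝ, 0 < u → F u = ∫ v in Ioi (0:ℝ), ψ v * Dd lam m u v := by
    intro u hu
    have h1 : (fun v => ψ v * Dd lam m u v)
        = fun v => ψ v * Kk lam u v - ψ v * tP lam m u (v^2) := by
      funext v; rw [Dd]; ring
    rw [h1, integral_sub (hKint u hu) (hPint u hu), hPzero u hu, sub_zero, hF]
  obtain ⟨Ck, hCk0, hCk⟩ := kernel_bound lam hlam m hm1
  obtain ⟨Cw, hCw0, hCw⟩ := W_lintegral lam β hlam m hm2 hβ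
  -- big u
  have hbig : IntegrableOn (fun u => u⁻¹ * |F u|) (Ioi 1) := by
    refine ⟨(measurable_inv.mul hFmeas.abs).aestronglyMeasurable, ?_⟩
    rw [hasFiniteIntegral_iff_ofReal
      ((ae_restrict_iff' measurableSet_Ioi).2 (ae_of_all _ fun u hu => by
        have : (0:ℝ) < u := lt_trans zero_lt_one hu
        positivity))]
    have key1 : ∀ u ∈ Ioi (1:ℝ), ENNReal.ofReal (u⁻¹ * |F u|)
        ≤ ∫⁻ v in Ioi (0:ℝ), ENNReal.ofReal (u⁻¹ * (Ck * (|ψ v| * Ww lam m u v))) := by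
      intro u hu
      have hu0 : (0:ℝ) < u := lt_trans zero_lt_one hu
      have e1 : |F u| ≤ ∫ v in Ioi (0:ℝ), |ψ v| * |Dd lam m u v| := by
        rw [hFD u hu0]
        simpa [Real.norm_eq_abs, abs_mul] using
          norm_integral_le_integral_norm (μ := volume.restrict (Ioi (0:ℝ)))
            (f := fun v => ψ v * Dd lam m u v)
      calc ENNReal.ofReal (u⁻¹ * |F u|)
          = ENNReal.ofReal u⁻¹ * ENNReal.ofReal (|F u|) := ENNReal.ofReal_mul (by positivity)
        _ ≤ ENNReal.ofReal u⁻¹ * ENNReal.ofReal (∫ v in Ioi (0:ℝ), |ψ v| * |Dd lam m u v|) := by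
            exact mul_le_mul_right (ENNReal.ofReal_le_ofReal e1) _
        _ = ENNReal.ofReal u⁻¹ * ∫⁻ v in Ioi (0:ℝ), ENNReal.ofReal (|ψ v| * |Dd lam m u v|) := by
            rw [MeasureTheory.ofReal_integral_eq_lintegral_ofReal
              (((hDint u hu0).abs).congr (ae_of_all _ fun v => abs_mul _ _))
              (ae_of_all _ fun v => mul_nonneg (abs_nonneg _) (abs_nonneg _))]
        _ ≤ ENNReal.ofReal u⁻¹ * ∫⁻ v in Ioi (0:ℝ), ENNReal.ofReal (Ck * (|ψ v| * Ww lam m u v)) := by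
            refine mul_le_mul_right (lintegral_mono_ae ?_) _
            refine (ae_restrict_iff' measurableSet_Ioi).2 (ae_of_all _ fun v hv => ?_)
            refine ENNReal.ofReal_le_ofReal ?_
            calc |ψ v| * |Dd lam m u v| ≤ |ψ v| * (Ck * Ww lam m u v) :=
                  mul_le_mul_of_nonneg_left (hCk u hu0 v hv) (abs_nonneg _)
              _ = Ck * (|ψ v| * Ww lam m u v) := by ring
        _ = ∫⁻ v in Ioi (0:ℝ), ENNReal.ofReal u⁻¹ * ENNReal.ofReal (Ck * (|ψ v| * Ww lam m u v)) := by
            rw [lintegral_const_mul' _ _ ENNReal.ofReal_ne_top]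
        _ = ∫⁻ v in Ioi (0:ℝ), ENNReal.ofReal (u⁻¹ * (Ck * (|ψ v| * Ww lam m u v))) := by
            refine lintegral_congr fun v => ?_
            rw [← ENNReal.ofReal_mul (by positivity)]
    calc ∫⁻ u in Ioi (1:ℝ), ENNReal.ofReal (u⁻¹ * |F u|)
        ≤ ∫⁻ u in Ioi (1:ℝ), ∫⁻ v in Ioi (0:ℝ),
            ENNReal.ofReal (u⁻¹ * (Ck * (|ψ v| * Ww lam m u v))) := by
          refine lintegral_mono_ae ?_
          exact (ae_restrict_iff' measurableSet_Ioi).2 (ae_of_all _ key1)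
      _ = ∫⁻ v in Ioi (0:ℝ), ∫⁻ u in Ioi (1:ℝ),
            ENNReal.ofReal (u⁻¹ * (Ck * (|ψ v| * Ww lam m u v))) := by
          refine lintegral_lintegral_swap ?_
          refine (Measurable.ennreal_ofReal ?_).aemeasurable
          exact measurable_fst.inv.mul
            ((((hmeas.comp measurable_snd).abs.mul (Ww_measurable lam m)).const_mul Ck))
      _ ≤ ∫⁻ v in Ioi (0:ℝ), ENNReal.ofReal (Ck * |ψ v|) * ENNReal.ofReal (Cw * Mv β v) := by
          refine lintegral_mono_ae ?_
          refine (ae_restrict_iff' measurableSet_Ioi).2 (ae_of_all _ fun v hv => ?_)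
          have hrw : ∀ u : ℝ, u⁻¹ * (Ck * (|ψ v| * Ww lam m u v))
              = (Ck * |ψ v|) * (u⁻¹ * Ww lam m u v) := fun u => by ring
          calc ∫⁻ u in Ioi (1:ℝ), ENNReal.ofReal (u⁻¹ * (Ck * (|ψ v| * Ww lam m u v)))
              = ∫⁻ u in Ioi (1:ℝ), ENNReal.ofReal (Ck * |ψ v|) * ENNReal.ofReal (u⁻¹ * Ww lam m u v) := by
                refine lintegral_congr fun u => ?_
                rw [hrw u, ENNReal.ofReal_mul (by positivity)]
            _ = ENNReal.ofReal (Ck * |ψ v|) * ∫⁻ u in Ioi (1:ℝ), ENNReal.ofReal (u⁻¹ * Ww lam m u v) :=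
                lintegral_const_mul' _ _ ENNReal.ofReal_ne_top
            _ ≤ ENNReal.ofReal (Ck * |ψ v|) * ENNReal.ofReal (Cw * Mv β v) :=
                mul_le_mul_right (hCw v hv) _
      _ = ∫⁻ v in Ioi (0:ℝ), ENNReal.ofReal (Ck * Cw) * ENNReal.ofReal (|ψ v| * Mv β v) := by
          refine lintegral_congr fun v => ?_
          rw [← ENNReal.ofReal_mul (by positivity), ← ENNReal.ofReal_mul (by positivity)]
          congr 1
          ring
      _ = ENNReal.ofReal (Ck * Cw) * ∫⁻ v in Ioi (0:ℝ), ENNReal.ofReal (|ψ v| * Mv β v) :=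
          lintegral_const_mul' _ _ ENNReal.ofReal_ne_top
      _ < ⊤ := by
          refine ENNReal.mul_lt_top ENNReal.ofReal_lt_top ?_
          refine lt_of_le_of_lt (lintegral_mono fun v => ?_) hMint.2
          rw [← ofReal_norm]
          exact ENNReal.ofReal_le_ofReal (le_abs_self _)
  -- small u
  have hsmall : IntegrableOn (fun u => u⁻¹ * |F u|) (Ioc 0 1) := by
    set C₀ : ℝ := ∫ v in Ioc (0:ℝ) 1, |ψ v| with hC₀
    have hC₀0 : 0 ≤ C₀ := setIntegral_nonneg measurableSet_Ioc fun v _ => abs_nonneg _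
    have hFb : ∀ u ∈ Ioc (0:ℝ) 1, |F u| ≤ u ^ lam * C₀ := by
      intro u hu
      have hu0 : (0:ℝ) < u := hu.1
      have e1 : |F u| ≤ ∫ v in Ioi (0:ℝ), |ψ v| * |Kk lam u v| := by
        simp only [hF]
        simpa [Real.norm_eq_abs, abs_mul] using
          norm_integral_le_integral_norm (μ := volume.restrict (Ioi (0:ℝ)))
            (f := fun v => ψ v * Kk lam u v)
      have e2 : ∫ v in Ioi (0:ℝ), |ψ v| * |Kk lam u v|
          ≤ ∫ v in Ioi (0:ℝ), u ^ lam * ((Ioc (0:ℝ) 1).indicator (fun v => |ψ v|) v) := by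
        refine integral_mono_ae (((hKint u hu0).abs).congr (ae_of_all _ fun v => abs_mul _ _))
          ((((integrable_indicator_iff measurableSet_Ioc).2 habs1).restrict).const_mul _) ?_
        refine (ae_restrict_iff' measurableSet_Ioi).2 (ae_of_all _ fun v hv => ?_)
        show |ψ v| * |Kk lam u v| ≤ u ^ lam * ((Ioc (0:ℝ) 1).indicator (fun v => |ψ v|) v)
        by_cases hlt : v^2 < u
        · have hv1 : v ∈ Ioc (0:ℝ) 1 := by
            refine ⟨hv, ?_⟩
            nlinarith [hu.2]
          rw [indicator_of_mem hv1]
          have h1 : |Kk lam u v| ≤ u ^ lam := by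
            rw [abs_of_nonneg (Kk_nonneg lam u v hu0)]
            exact Kk_le lam u v hlam hu0
          calc |ψ v| * |Kk lam u v| ≤ |ψ v| * u ^ lam :=
                mul_le_mul_of_nonneg_left h1 (abs_nonneg _)
            _ = u ^ lam * |ψ v| := by ring
        · rw [Kk, if_neg hlt, abs_zero, mul_zero]
          have : 0 ≤ (Ioc (0:ℝ) 1).indicator (fun v => |ψ v|) v :=
            indicator_nonneg (fun v _ => abs_nonneg _) v
          positivity
      have e3 : ∫ v in Ioi (0:ℝ), u ^ lam * ((Ioc (0:ℝ) 1).indicator (fun v => |ψ v|) v)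
          = u ^ lam * C₀ := by
        rw [integral_const_mul]
        congr 1
        rw [integral_indicator measurableSet_Ioc, Measure.restrict_restrict measurableSet_Ioc]
        have hinter : Ioc (0:ℝ) 1 ∩ Ioi 0 = Ioc (0:ℝ) 1 :=
          inter_eq_left.2 (fun x hx => hx.1)
        rw [hinter]
      exact le_trans e1 (le_trans e2 (le_of_eq e3))
    refine Integrable.mono' (g := fun u => C₀ * u ^ (lam - 1))
      ((intervalIntegral.intervalIntegrable_rpow' (by linarith : (-1:ℝ) < lam - 1)).1.const_mul C₀)
      (measurable_inv.mul hFmeas.abs).aestronglyMeasurable ?_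
    refine (ae_restrict_iff' measurableSet_Ioc).2 (ae_of_all _ fun u hu => ?_)
    have hu0 : (0:ℝ) < u := hu.1
    rw [Real.norm_eq_abs, abs_of_nonneg (by positivity : (0:ℝ) ≤ u⁻¹ * |F u|)]
    have h1 : u⁻¹ * |F u| ≤ u⁻¹ * (u ^ lam * C₀) :=
      mul_le_mul_of_nonneg_left (hFb u hu) (by positivity)
    have h2 : u⁻¹ * (u ^ lam * C₀) = C₀ * u ^ (lam - 1) := by
      rw [Real.rpow_sub hu0, Real.rpow_one]
      field_simp
    linarith
  have hFint : IntegrableOn (fun u => u⁻¹ * |F u|) (Ioi 0) := by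
    rw [← Ioc_union_Ioi_eq_Ioi (zero_le_one : (0:ℝ) ≤ 1)]
    exact hsmall.union hbig
  -- relation to fracB
  have hfrac : ∀ u ∈ Ioi (0:ℝ), |2 / Real.Gamma (lam+1)| * (u⁻¹ * |F u|)
      = u⁻¹ * |fracB (lam+1) ψ u| := by
    intro u hu
    have hu0 : (0:ℝ) < u := hu
    have hsq : (0:ℝ) < Real.sqrt u := Real.sqrt_pos.2 hu0
    have hKeq : F u = ∫ v in (0:ℝ)..(Real.sqrt u), ψ v * (u - v^2) ^ lam := by
      rw [intervalIntegral.integral_of_le (Real.sqrt_nonneg u)]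
      have h1 : F u = (∫ v in Ioc (0:ℝ) (Real.sqrt u), ψ v * Kk lam u v)
          + ∫ v in Ioi (Real.sqrt u), ψ v * Kk lam u v := by
        simp only [hF]
        rw [← setIntegral_union (Set.Ioc_disjoint_Ioi le_rfl) measurableSet_Ioi
          ((hKint u hu0).mono_set Ioc_subset_Ioi_self)
          ((hKint u hu0).mono_set (Ioi_subset_Ioi hsq.le)),
          Ioc_union_Ioi_eq_Ioi hsq.le]
      rw [h1]
      have hz : ∫ v in Ioi (Real.sqrt u), ψ v * Kk lam u v = 0 := by
        rw [setIntegral_congr_fun measurableSet_Ioi (g := fun _ => (0:ℝ)) (fun v hv => ?_)]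
        · simp
        · have hvu : u ≤ v^2 := by
            have h1 : Real.sqrt u < v := hv
            nlinarith [Real.sq_sqrt hu0.le, Real.sqrt_nonneg u]
          rw [Kk, if_neg (not_lt.2 hvu), mul_zero]
      rw [hz, add_zero]
      refine setIntegral_congr_fun measurableSet_Ioc (fun v hv => ?_)
      show ψ v * Kk lam u v = ψ v * (u - v^2) ^ lam
      rcases lt_or_eq_of_le hv.2 with hlt | heq
      · rw [Kk, if_pos ((Real.lt_sqrt hv.1.le).1 hlt)]
      · have : v^2 = u := by rw [heq, Real.sq_sqrt hu0.le]
        rw [Kk, if_neg (by rw [this]; exact lt_irrefl u), this, sub_self,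
          Real.zero_rpow (ne_of_gt hlam), mul_zero]
    rw [fracB, show lam + 1 - 1 = lam from by ring, ← hKeq, abs_mul]
    ring
  have hfin2 : IntegrableOn (fun u => |2 / Real.Gamma (lam+1)| * (u⁻¹ * |F u|)) (Ioi 0) :=
    hFint.const_mul _
  exact hfin2.congr_fun (fun u hu => hfrac u hu) measurableSet_Ioi
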